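/- Let d ≥ 1 and s, l ∈ ℝ. There exist a constant c > 0 and N₀ ∈ ℕ, depending only on d, s, l, such that for every integer N ≥ N₀ the following holds. Set Q := (−1/2, 1/2)^d, r := (log N)^{−2} and Σ := {0, Ne₁}. Then: (i) for every T with 0 < T ≤ c·N^{−2}, (∫_{ℝ^d} ⟨ξ⟩^{2l} |W(T,ξ)|² dξ)^{1/2} ≥ c · r² · T · N^{l−s+1}; and (ii) for every T with 0 < T ≤ c·N^{−1}, (∫_{ℝ^d} ⟨ξ⟩^{2l} |W(T,ξ)|² dξ)^{1/2} ≥ c · r² · T · N^{−2s}. -/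

import Mathlib

open MeasureTheory Set
open scoped Classical
noncomputable section

/-- The (Fourier-side) wave component of the second Picard iterate, up to a unimodular factor:
`W(T,ξ) = r²|Q|⁻¹|ξ| Σ_{η₁,η₂∈Σ} ∫_{η₁+Q} 1_{η₂+Q}(η−ξ) ⟨η⟩^{−s}⟨η−ξ⟩^{−s}
  (∫₀ᵀ e^{iσ(|ξ|−|η|²+|η−ξ|²)} dσ) dη`. -/
def Wfun {d : ℕ} (s r : ℝ) (Q : Set (EuclideanSpace ℝ (Fin d)))
    (S : Finset (EuclideanSpace ℝ (Fin d))) (T : ℝ) (ξ : EuclideanSpace ℝ (Fin d)) : ℂ :=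
  ((r ^ 2 * ((volume Q).toReal)⁻¹ * ‖ξ‖ : ℝ) : ℂ) *
    ∑ η₁ ∈ S, ∑ η₂ ∈ S,
      ∫ η in {ζ : EuclideanSpace ℝ (Fin d) | ζ - η₁ ∈ Q},
        Set.indicator {ζ : EuclideanSpace ℝ (Fin d) | ζ - η₂ ∈ Q} (fun _ => (1 : ℂ)) (η - ξ) *
          (((1 + ‖η‖ ^ 2) ^ (-s / 2) * (1 + ‖η - ξ‖ ^ 2) ^ (-s / 2) : ℝ) : ℂ) *
          ∫ σ in (0 : ℝ)..T,
            Complex.exp (Complex.I * ((σ * (‖ξ‖ - ‖η‖ ^ 2 + ‖η - ξ‖ ^ 2) : ℝ) : ℂ))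

abbrev Euc (d : ℕ) := EuclideanSpace ℝ (Fin d)
variable {d : ℕ}



def Box (d : ℕ) (a : Euc d) (p q : ℝ) : Set (Euc d) := {ξ | ∀ i, ξ i - a i ∈ Set.Ioo p q}

lemma isOpen_box (a : Euc d) (p q : ℝ) : IsOpen (Box d a p q) := by
  have : Box d a p q = ⋂ i, (fun ξ : Euc d => ξ i - a i) ⁻¹' (Set.Ioo p q) := by
    ext ξ; simp [Box]
  rw [this]
  exact isOpen_iInter_of_finite fun i =>
    (((EuclideanSpace.proj i : Euc d →L[ℝ] ℝ).continuous.sub continuous_const).isOpen_preimage _ isOpen_Ioo)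

lemma measurableSet_box (a : Euc d) (p q : ℝ) : MeasurableSet (Box d a p q) :=
  (isOpen_box a p q).measurableSet

lemma volume_box (a : Euc d) (p q : ℝ) : volume (Box d a p q) = ENNReal.ofReal (q - p) ^ d := by
  have h : Box d a p q =
      (MeasurableEquiv.toLp 2 (Fin d → ℝ)).symm ⁻¹' (Set.univ.pi fun i => Set.Ioo (a i + p) (a i + q)) := by
    ext ξ
    simp only [Box, mem_setOf_eq, mem_preimage, Set.mem_pi, Set.mem_univ, forall_true_left, mem_Ioo]
    simp only [MeasurableEquiv.coe_toLp_symm]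
    constructor
    · intro h i; have := h i; constructor <;> [linarith [this.1]; linarith [this.2]]
    · intro h i; have := h i; constructor <;> [linarith [this.1]; linarith [this.2]]
  rw [h, (EuclideanSpace.volume_preserving_symm_measurableEquiv_toLp (Fin d)).measure_preimage
    (MeasurableSet.univ_pi fun i => measurableSet_Ioo).nullMeasurableSet]
  rw [volume_pi_pi]
  simp [Real.volume_Ioo]



def phiF (ξ η : Euc d) : ℝ := ‖ξ‖ - ‖η‖ ^ 2 + ‖η - ξ‖ ^ 2
def gF (s : ℝ) (ξ η : Euc d) : ℝ := (1 + ‖η‖ ^ 2) ^ (-s / 2) * (1 + ‖η - ξ‖ ^ 2) ^ (-s / 2)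
def KF (T : ℝ) (ξ η : Euc d) : ℂ :=
  ∫ σ in (0 : ℝ)..T, Complex.exp (Complex.I * ((σ * phiF ξ η : ℝ) : ℂ))

lemma gF_pos (s : ℝ) (ξ η : Euc d) : 0 < gF s ξ η := by
  unfold gF; positivity

lemma KF_re_ge {T : ℝ} (hT : 0 < T) (ξ η : Euc d) (h : |phiF ξ η| * T ≤ 1) :
    T / 2 ≤ (KF T ξ η).re := by
  set φ := phiF ξ η with hφ
  have hcont : Continuous fun σ : ℝ => Complex.exp (Complex.I * ((σ * φ : ℝ) : ℂ)) := by
    fun_prop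
  have hint : IntegrableOn (fun σ : ℝ => Complex.exp (Complex.I * ((σ * φ : ℝ) : ℂ)))
      (Set.Ioc 0 T) volume := hcont.integrableOn_Ioc
  have h1 : KF T ξ η = ∫ σ in Set.Ioc 0 T, Complex.exp (Complex.I * ((σ * φ : ℝ) : ℂ)) := by
    rw [KF, intervalIntegral.integral_of_le hT.le]
  have h2 : (KF T ξ η).re = ∫ σ in Set.Ioc 0 T, Real.cos (σ * φ) := by
    rw [h1]
    have := (integral_re hint).symm
    simp only [RCLike.re_to_complex] at this
    rw [this]
    refine setIntegral_congr_fun measurableSet_Ioc fun σ _ => ?_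
    rw [mul_comm Complex.I, Complex.exp_ofReal_mul_I_re]
  rw [h2]
  have hvol : (volume (Set.Ioc (0:ℝ) T)).toReal = T := by
    simp [Real.volume_Ioc, hT.le]
  have : (1/2 : ℝ) * (volume (Set.Ioc (0:ℝ) T)).toReal ≤ ∫ σ in Set.Ioc 0 T, Real.cos (σ * φ) := by
    refine setIntegral_ge_of_const_le_real measurableSet_Ioc (by simp) ?_
      (Real.continuous_cos.comp (continuous_id.mul continuous_const)).integrableOn_Ioc
    intro σ hσ
    have hσ0 : 0 < σ := hσ.1
    have hσT : σ ≤ T := hσ.2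
    have habs : |σ * φ| ≤ 1 := by
      rw [abs_mul, abs_of_pos hσ0]
      calc σ * |φ| ≤ T * |φ| := by nlinarith [abs_nonneg φ]
        _ ≤ 1 := by linarith [mul_comm T |φ| ▸ h]
    have h3 := Real.one_sub_sq_div_two_le_cos (x := σ * φ)
    have h4 : (σ * φ) ^ 2 ≤ 1 := by nlinarith [abs_nonneg (σ * φ), sq_abs (σ * φ)]
    linarith
  rw [hvol] at this; linarith

lemma KF_norm_le {T : ℝ} (hT : 0 ≤ T) (ξ η : Euc d) : ‖KF T ξ η‖ ≤ T := by
  have := intervalIntegral.norm_integral_le_of_norm_le_const (C := 1)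
    (f := fun σ : ℝ => Complex.exp (Complex.I * ((σ * phiF ξ η : ℝ) : ℂ)))
    (a := 0) (b := T) ?_
  · rw [KF]
    simpa [abs_of_nonneg hT, Complex.ofReal_mul] using this
  · intro σ _
    rw [mul_comm Complex.I]
    exact le_of_eq (Complex.norm_exp_ofReal_mul_I _)

lemma rpow_min_le {A B y t : ℝ} (hA : 0 < A) (h1 : A ≤ y) (h2 : y ≤ B) :
    min (A ^ t) (B ^ t) ≤ y ^ t := by
  rcases le_or_gt 0 t with ht | ht
  · exact le_trans (min_le_left _ _) (Real.rpow_le_rpow hA.le h1 ht)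
  · exact le_trans (min_le_right _ _) (Real.rpow_le_rpow_of_nonpos (hA.trans_le h1) h2 ht.le)

lemma rpow_le_max {A B y t : ℝ} (hA : 0 < A) (h1 : A ≤ y) (h2 : y ≤ B) :
    y ^ t ≤ max (A ^ t) (B ^ t) := by
  rcases le_or_gt 0 t with ht | ht
  · exact le_trans (Real.rpow_le_rpow (hA.le.trans h1) h2 ht) (le_max_right _ _)
  · exact le_trans (Real.rpow_le_rpow_of_nonpos hA h1 ht.le) (le_max_left _ _)

lemma norm_sq_eq (x : Euc d) : ‖x‖ ^ 2 = ∑ i, (x i) ^ 2 := by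
  rw [EuclideanSpace.norm_eq]
  rw [Real.sq_sqrt (by positivity)]
  simp [sq_abs]

lemma comp_le_norm (x : Euc d) (i : Fin d) : |x i| ≤ ‖x‖ := by
  have h1 : (x i) ^ 2 ≤ ‖x‖ ^ 2 := by
    rw [norm_sq_eq]
    exact Finset.single_le_sum (fun j _ => sq_nonneg (x j)) (Finset.mem_univ i)
  nlinarith [norm_nonneg x, abs_nonneg (x i), sq_abs (x i)]







def termF (s T : ℝ) (η₁ η₂ ξ : Euc d) : ℂ :=
  ∫ η in Box d η₁ (-(1/2)) (1/2),
    Set.indicator (Box d η₂ (-(1/2)) (1/2)) (fun _ => (1:ℂ)) (η - ξ) *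
      ((gF s ξ η : ℝ) : ℂ) * KF T ξ η


lemma cont_KF (T : ℝ) : Continuous fun p : Euc d × Euc d => KF T p.1 p.2 := by
  apply intervalIntegral.continuous_parametric_intervalIntegral_of_continuous' (μ := volume)
    (f := fun (p : Euc d × Euc d) (σ : ℝ) => Complex.exp (Complex.I * ((σ * phiF p.1 p.2 : ℝ) : ℂ)))
  unfold Function.uncurry phiF
  fun_prop

lemma cont_gF (s : ℝ) : Continuous fun p : Euc d × Euc d => gF s p.1 p.2 := by
  have h1 : Continuous fun p : Euc d × Euc d => 1 + ‖p.2‖ ^ 2 := by fun_prop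
  have h2 : Continuous fun p : Euc d × Euc d => 1 + ‖p.2 - p.1‖ ^ 2 := by fun_prop
  exact (h1.rpow_const fun x => Or.inl (by positivity)).mul
    (h2.rpow_const fun x => Or.inl (by positivity))

lemma sm_integrand (s T : ℝ) (η₂ : Euc d) :
    StronglyMeasurable (fun p : Euc d × Euc d =>
      Set.indicator (Box d η₂ (-(1/2)) (1/2)) (fun _ => (1:ℂ)) (p.2 - p.1) *
        ((gF s p.1 p.2 : ℝ) : ℂ) * KF T p.1 p.2) := by
  have hset : MeasurableSet {p : Euc d × Euc d | p.2 - p.1 ∈ Box d η₂ (-(1/2)) (1/2)} :=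
    (measurable_snd.sub measurable_fst) (measurableSet_box _ _ _)
  have hind : StronglyMeasurable (fun p : Euc d × Euc d =>
      Set.indicator (Box d η₂ (-(1/2)) (1/2)) (fun _ => (1:ℂ)) (p.2 - p.1)) := by
    have : (fun p : Euc d × Euc d =>
        Set.indicator (Box d η₂ (-(1/2)) (1/2)) (fun _ => (1:ℂ)) (p.2 - p.1)) =
        Set.indicator {p : Euc d × Euc d | p.2 - p.1 ∈ Box d η₂ (-(1/2)) (1/2)}
          (fun _ => (1:ℂ)) := by
      funext p
      by_cases h : p.2 - p.1 ∈ Box d η₂ (-(1/2)) (1/2) <;>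
        simp [Set.indicator_apply, h]
    rw [this]
    exact stronglyMeasurable_const.indicator hset
  exact (hind.mul ((Complex.continuous_ofReal.comp (cont_gF s)).stronglyMeasurable)).mul
    (cont_KF T).stronglyMeasurable

lemma aesm_term (s T : ℝ) (η₁ η₂ : Euc d) :
    AEStronglyMeasurable (fun ξ => termF s T η₁ η₂ ξ) volume :=
  ((sm_integrand s T η₂).integral_prod_right'
    (ν := volume.restrict (Box d η₁ (-(1/2)) (1/2)))).aestronglyMeasurable



lemma volD (η₁ : Euc d) : volume (Box d η₁ (-(1/2)) (1/2)) = 1 := by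
  rw [volume_box]; norm_num

lemma sm_integrand_one (s T : ℝ) (η₂ ξ : Euc d) :
    AEStronglyMeasurable (fun η : Euc d =>
      Set.indicator (Box d η₂ (-(1/2)) (1/2)) (fun _ => (1:ℂ)) (η - ξ) *
        ((gF s ξ η : ℝ) : ℂ) * KF T ξ η) volume := by
  exact ((sm_integrand s T η₂).comp_measurable
    (measurable_const.prodMk measurable_id)).aestronglyMeasurable

lemma term_eq_zero {s T : ℝ} {η₁ η₂ ξ : Euc d}
    (h : ∀ η ∈ Box d η₁ (-(1/2)) (1/2), η - ξ ∉ Box d η₂ (-(1/2)) (1/2)) :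
    termF s T η₁ η₂ ξ = 0 := by
  rw [termF, setIntegral_congr_fun (measurableSet_box _ _ _) (g := fun _ => (0:ℂ))]
  · exact integral_zero _ _
  · intro η hη
    show Set.indicator _ _ _ * _ * _ = (0 : ℂ)
    rw [Set.indicator_of_notMem (h η hη), zero_mul, zero_mul]

lemma integrand_norm_le {s T : ℝ} (hT : 0 ≤ T) {η₁ η₂ ξ : Euc d} {M : ℝ} (hM0 : 0 ≤ M)
    (hM : ∀ η ∈ Box d η₁ (-(1/2)) (1/2), η - ξ ∈ Box d η₂ (-(1/2)) (1/2) → gF s ξ η ≤ M) :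
    ∀ η ∈ Box d η₁ (-(1/2)) (1/2),
      ‖Set.indicator (Box d η₂ (-(1/2)) (1/2)) (fun _ => (1:ℂ)) (η - ξ) *
        ((gF s ξ η : ℝ) : ℂ) * KF T ξ η‖ ≤ M * T := by
  intro η hη
  by_cases hmem : η - ξ ∈ Box d η₂ (-(1/2)) (1/2)
  · rw [Set.indicator_of_mem hmem, one_mul, norm_mul, Complex.norm_real]
    have hg := gF_pos s ξ η
    exact mul_le_mul (by rw [Real.norm_eq_abs, abs_of_pos hg]; exact hM η hη hmem)
      (KF_norm_le hT ξ η) (norm_nonneg _) hM0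
  · rw [Set.indicator_of_notMem hmem, zero_mul, zero_mul, norm_zero]
    exact mul_nonneg hM0 hT

lemma term_norm_le {s T : ℝ} (hT : 0 ≤ T) {η₁ η₂ ξ : Euc d} {M : ℝ} (hM0 : 0 ≤ M)
    (hM : ∀ η ∈ Box d η₁ (-(1/2)) (1/2), η - ξ ∈ Box d η₂ (-(1/2)) (1/2) → gF s ξ η ≤ M) :
    ‖termF s T η₁ η₂ ξ‖ ≤ M * T := by
  have h := norm_setIntegral_le_of_norm_le_const (C := M * T) (μ := volume)
    (s := Box d η₁ (-(1/2)) (1/2))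
    (f := fun η => Set.indicator (Box d η₂ (-(1/2)) (1/2)) (fun _ => (1:ℂ)) (η - ξ) *
        ((gF s ξ η : ℝ) : ℂ) * KF T ξ η)
    (by rw [volD]; exact ENNReal.one_lt_top)
    (integrand_norm_le hT hM0 hM)
  rw [measureReal_def, volD] at h
  rw [termF]
  simpa using h

lemma integrableOn_integrand {s T : ℝ} (hT : 0 ≤ T) {η₁ η₂ ξ : Euc d} {M : ℝ} (hM0 : 0 ≤ M)
    (hM : ∀ η ∈ Box d η₁ (-(1/2)) (1/2), η - ξ ∈ Box d η₂ (-(1/2)) (1/2) → gF s ξ η ≤ M) :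
    IntegrableOn (fun η => Set.indicator (Box d η₂ (-(1/2)) (1/2)) (fun _ => (1:ℂ)) (η - ξ) *
        ((gF s ξ η : ℝ) : ℂ) * KF T ξ η) (Box d η₁ (-(1/2)) (1/2)) volume := by
  refine Measure.integrableOn_of_bounded (M := M * T) (by rw [volD]; simp)
    (sm_integrand_one s T η₂ ξ) ?_
  exact (ae_restrict_iff' (measurableSet_box _ _ _)).mpr
    (Filter.Eventually.of_forall (integrand_norm_le hT hM0 hM))


def rho (s T : ℝ) (η₂ ξ η : Euc d) : ℝ :=
  Set.indicator (Box d η₂ (-(1/2)) (1/2)) (fun _ => (1:ℝ)) (η - ξ) *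
    gF s ξ η * (KF T ξ η).re

lemma re_integrand (s T : ℝ) (η₂ ξ η : Euc d) :
    (Set.indicator (Box d η₂ (-(1/2)) (1/2)) (fun _ => (1:ℂ)) (η - ξ) *
      ((gF s ξ η : ℝ) : ℂ) * KF T ξ η).re = rho s T η₂ ξ η := by
  by_cases hmem : η - ξ ∈ Box d η₂ (-(1/2)) (1/2)
  · rw [rho, Set.indicator_of_mem hmem, Set.indicator_of_mem hmem, one_mul, one_mul,
      Complex.re_ofReal_mul]
  · rw [rho, Set.indicator_of_notMem hmem, Set.indicator_of_notMem hmem]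
    simp

lemma term_re_eq {s T : ℝ} (hT : 0 ≤ T) {η₁ η₂ ξ : Euc d} {M : ℝ} (hM0 : 0 ≤ M)
    (hM : ∀ η ∈ Box d η₁ (-(1/2)) (1/2), η - ξ ∈ Box d η₂ (-(1/2)) (1/2) → gF s ξ η ≤ M) :
    (termF s T η₁ η₂ ξ).re = ∫ η in Box d η₁ (-(1/2)) (1/2), rho s T η₂ ξ η := by
  rw [termF]
  have h := (integral_re (integrableOn_integrand hT hM0 hM)).symm
  simp only [RCLike.re_to_complex] at h
  rw [h]
  exact setIntegral_congr_fun (measurableSet_box _ _ _) fun η _ => re_integrand s T η₂ ξ η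

lemma rho_aesm (s T : ℝ) (η₂ ξ : Euc d) :
    AEStronglyMeasurable (fun η => rho s T η₂ ξ η) volume := by
  have h := Complex.continuous_re.aestronglyMeasurable.comp_aemeasurable
    (sm_integrand_one s T η₂ ξ).aemeasurable
  have heq : (fun η => rho s T η₂ ξ η) = fun η =>
      (Set.indicator (Box d η₂ (-(1/2)) (1/2)) (fun _ => (1:ℂ)) (η - ξ) *
        ((gF s ξ η : ℝ) : ℂ) * KF T ξ η).re := by
    funext η; exact (re_integrand s T η₂ ξ η).symm
  rw [heq]; exact h

lemma rho_integrableOn {s T : ℝ} (hT : 0 ≤ T) {η₁ η₂ ξ : Euc d} {M : ℝ} (hM0 : 0 ≤ M)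
    (hM : ∀ η ∈ Box d η₁ (-(1/2)) (1/2), η - ξ ∈ Box d η₂ (-(1/2)) (1/2) → gF s ξ η ≤ M) :
    IntegrableOn (fun η => rho s T η₂ ξ η) (Box d η₁ (-(1/2)) (1/2)) volume := by
  refine Measure.integrableOn_of_bounded (M := M * T) (by rw [volD]; simp)
    (rho_aesm s T η₂ ξ) ?_
  refine (ae_restrict_iff' (measurableSet_box _ _ _)).mpr (Filter.Eventually.of_forall ?_)
  intro η hη
  rw [← re_integrand s T η₂ ξ η, Real.norm_eq_abs]
  exact le_trans (Complex.abs_re_le_norm _) (integrand_norm_le hT hM0 hM η hη)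

lemma rho_nonneg {s T : ℝ} (hT : 0 < T) {η₂ ξ η : Euc d}
    (hΦ : η - ξ ∈ Box d η₂ (-(1/2)) (1/2) → |phiF ξ η| * T ≤ 1) :
    0 ≤ rho s T η₂ ξ η := by
  by_cases hmem : η - ξ ∈ Box d η₂ (-(1/2)) (1/2)
  · rw [rho, Set.indicator_of_mem hmem, one_mul]
    exact mul_nonneg (gF_pos s ξ η).le (le_trans (by linarith) (KF_re_ge hT ξ η (hΦ hmem)))
  · rw [rho, Set.indicator_of_notMem hmem, zero_mul, zero_mul]

lemma term_re_nonneg {s T : ℝ} (hT : 0 < T) {η₁ η₂ ξ : Euc d} {M : ℝ} (hM0 : 0 ≤ M)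
    (hM : ∀ η ∈ Box d η₁ (-(1/2)) (1/2), η - ξ ∈ Box d η₂ (-(1/2)) (1/2) → gF s ξ η ≤ M)
    (hΦ : ∀ η ∈ Box d η₁ (-(1/2)) (1/2), η - ξ ∈ Box d η₂ (-(1/2)) (1/2) →
      |phiF ξ η| * T ≤ 1) :
    0 ≤ (termF s T η₁ η₂ ξ).re := by
  rw [term_re_eq hT.le hM0 hM]
  refine setIntegral_nonneg (measurableSet_box _ _ _) fun η hη => ?_
  exact rho_nonneg hT (hΦ η hη)

lemma boxB_subset (η₁ : Euc d) : Box d η₁ 0 (1/8) ⊆ Box d η₁ (-(1/2)) (1/2) := by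
  intro η hη i
  have := hη i
  constructor <;> [linarith [this.1]; linarith [this.2]]

lemma term_re_ge {s T : ℝ} (hT : 0 < T) {η₁ η₂ ξ : Euc d} {M m : ℝ} (hM0 : 0 ≤ M)
    (hM : ∀ η ∈ Box d η₁ (-(1/2)) (1/2), η - ξ ∈ Box d η₂ (-(1/2)) (1/2) → gF s ξ η ≤ M)
    (hΦ : ∀ η ∈ Box d η₁ (-(1/2)) (1/2), η - ξ ∈ Box d η₂ (-(1/2)) (1/2) →
      |phiF ξ η| * T ≤ 1)
    (hm : 0 ≤ m)
    (hsub : ∀ η ∈ Box d η₁ 0 (1/8), η - ξ ∈ Box d η₂ (-(1/2)) (1/2))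
    (hg : ∀ η ∈ Box d η₁ 0 (1/8), m ≤ gF s ξ η) :
    m * (T / 2) * (1/8) ^ d ≤ (termF s T η₁ η₂ ξ).re := by
  rw [term_re_eq hT.le hM0 hM]
  have hvolB : (volume (Box d η₁ 0 (1/8))).toReal = (1/8) ^ d := by
    rw [volume_box]
    rw [← ENNReal.ofReal_pow (by norm_num)]
    rw [ENNReal.toReal_ofReal (by positivity)]
    norm_num
  have h1 : m * (T / 2) * (1/8) ^ d ≤ ∫ η in Box d η₁ 0 (1/8), rho s T η₂ ξ η := by
    rw [← hvolB]
    refine setIntegral_ge_of_const_le_real (measurableSet_box _ _ _)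
      (by rw [volume_box]; simp) ?_
      ((rho_integrableOn hT.le hM0 hM).mono_set (boxB_subset η₁))
    intro η hη
    rw [rho, Set.indicator_of_mem (hsub η hη), one_mul]
    have hK := KF_re_ge hT ξ η (hΦ η (boxB_subset η₁ hη) (hsub η hη))
    exact mul_le_mul (hg η hη) hK (by linarith) (le_trans hm (hg η hη))
  refine le_trans h1 (setIntegral_mono_set (rho_integrableOn hT.le hM0 hM) ?_ ?_)
  · refine (ae_restrict_iff' (measurableSet_box _ _ _)).mpr (Filter.Eventually.of_forall ?_)
    intro η hη
    exact rho_nonneg hT (hΦ η hη)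
  · exact HasSubset.Subset.eventuallyLE (boxB_subset η₁)





lemma normsq_le_of_comp (x : Euc d) (b : ℝ) (h : ∀ i, |x i| ≤ b) :
    ‖x‖ ^ 2 ≤ d * b ^ 2 := by
  rw [norm_sq_eq]
  calc ∑ i, (x i) ^ 2 ≤ ∑ _i : Fin d, b ^ 2 :=
        Finset.sum_le_sum fun i _ => by nlinarith [h i, abs_nonneg (x i), sq_abs (x i)]
    _ = d * b ^ 2 := by simp [Finset.sum_const, Finset.card_univ, mul_comm]

lemma norm_le_of_comp (hd : 0 < d) (x : Euc d) (b : ℝ) (hb : 0 ≤ b) (h : ∀ i, |x i| ≤ b) :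
    ‖x‖ ≤ d * b := by
  have h1 := normsq_le_of_comp x b h
  have hd1 : (1 : ℝ) ≤ d := by exact_mod_cast hd
  have h2 : ‖x‖ ^ 2 ≤ (d * b) ^ 2 := by nlinarith
  calc ‖x‖ = Real.sqrt (‖x‖ ^ 2) := (Real.sqrt_sq (norm_nonneg x)).symm
    _ ≤ Real.sqrt ((d * b) ^ 2) := Real.sqrt_le_sqrt h2
    _ = d * b := Real.sqrt_sq (by positivity)

lemma comp_sq_le_normsq (x : Euc d) (i : Fin d) : (x i) ^ 2 ≤ ‖x‖ ^ 2 := by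
  rw [norm_sq_eq]
  exact Finset.single_le_sum (fun j _ => sq_nonneg (x j)) (Finset.mem_univ i)

section WithV
variable {NN : ℝ} {i0 : Fin d} {v : Euc d} (hv : ∀ i, v i = if i = i0 then NN else 0)

include hv

lemma near_v_bounds (hd : 0 < d) (hN : (d : ℝ) + 2 ≤ NN) (x : Euc d)
    (h : ∀ i, |x i - v i| ≤ 1) :
    NN ^ 2 / 4 ≤ 1 + ‖x‖ ^ 2 ∧ 1 + ‖x‖ ^ 2 ≤ 4 * NN ^ 2 := by
  have hd1 : (1 : ℝ) ≤ d := by exact_mod_cast hd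
  have hNN3 : (3 : ℝ) ≤ NN := by linarith
  constructor
  · have h0 : |x i0 - NN| ≤ 1 := by have := h i0; rwa [hv i0, if_pos rfl] at this
    have h1 : (x i0) ^ 2 ≤ ‖x‖ ^ 2 := comp_sq_le_normsq x i0
    have h2 : NN - 1 ≤ x i0 := by have := abs_le.mp h0; linarith [this.1]
    nlinarith
  · have hsum : ∑ i, (x i) ^ 2 ≤ ∑ i : Fin d, (1 + if i = i0 then (NN + 1) ^ 2 - 1 else 0) := by
      refine Finset.sum_le_sum fun i _ => ?_
      by_cases hi : i = i0
      · subst hi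
        have h0 : |x i - NN| ≤ 1 := by have := h i; rwa [hv i, if_pos rfl] at this
        have := abs_le.mp h0
        rw [if_pos rfl]
        nlinarith [this.1, this.2]
      · have h0 : |x i| ≤ 1 := by have := h i; rwa [hv i, if_neg hi, sub_zero] at this
        have := abs_le.mp h0
        rw [if_neg hi]
        nlinarith [this.1, this.2]
    have hsum2 : ∑ i : Fin d, ((1 : ℝ) + if i = i0 then (NN + 1) ^ 2 - 1 else 0)
        = d + ((NN + 1) ^ 2 - 1) := by
      rw [Finset.sum_add_distrib, Finset.sum_const, Finset.card_univ]
      rw [Finset.sum_ite_eq' Finset.univ i0 (fun _ => (NN + 1) ^ 2 - 1)]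
      simp [Finset.mem_univ]
    rw [norm_sq_eq]
    nlinarith [hsum, hsum2.le, hsum2.ge]

lemma norm_v_le : ∀ i, |v i| ≤ |NN| := by
  intro i; rw [hv i]
  by_cases hi : i = i0 <;> simp [hi, abs_nonneg]

end WithV

lemma sq_rpow (x : ℝ) (hx : 0 ≤ x) (u : ℝ) : (x ^ 2) ^ u = x ^ (2 * u) := by
  rw [← Real.rpow_natCast x 2, ← Real.rpow_mul hx]; norm_num

lemma rpow_sq (x : ℝ) (hx : 0 < x) (a : ℝ) : (x ^ a) ^ 2 = x ^ (2 * a) := by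
  rw [sq, ← Real.rpow_add hx]; ring_nf

section Main
variable (hd : 0 < d)

def vv (hd : 0 < d) (N : ℕ) : Euc d := (N : ℝ) • EuclideanSpace.single (⟨0, hd⟩ : Fin d) (1 : ℝ)

lemma vv_apply (N : ℕ) (i : Fin d) :
    vv hd N i = if i = (⟨0, hd⟩ : Fin d) then (N : ℝ) else 0 := by
  simp [vv, EuclideanSpace.single_apply, mul_ite]

def Qset (d : ℕ) : Set (Euc d) := {ξ : Euc d | ∀ i, |ξ i| < 1 / 2}

lemma setD_eq (η₁ : Euc d) :
    {ζ : Euc d | ζ - η₁ ∈ Qset d} = Box d η₁ (-(1/2)) (1/2) := by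
  ext ζ
  simp only [Qset, Box, mem_setOf_eq, mem_Ioo]
  constructor
  · intro h i
    have h2 : |ζ i - η₁ i| < 1/2 := by
      have := h i; simpa [PiLp.sub_apply] using this
    have := abs_lt.mp h2
    exact ⟨by linarith [this.1], by linarith [this.2]⟩
  · intro h i
    simp only [PiLp.sub_apply]
    exact abs_lt.mpr ⟨by linarith [(h i).1], (h i).2⟩

lemma vol_Qset : volume (Qset d) = 1 := by
  have h : Qset d = Box d 0 (-(1/2)) (1/2) := by
    have := setD_eq (d := d) 0
    simpa using this
  rw [h, volume_box]
  norm_num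

lemma zero_ne_vv (N : ℕ) (hN : 1 ≤ N) : (0 : Euc d) ≠ vv hd N := by
  intro h
  have h1 := congrArg (fun x : Euc d => x ⟨0, hd⟩) h
  simp only [vv_apply, if_pos rfl] at h1
  norm_num at h1
  have : (1 : ℝ) ≤ (N : ℝ) := by exact_mod_cast hN
  linarith [h1]

lemma Wfun_eq (s r T : ℝ) (N : ℕ) (hN : 1 ≤ N) (ξ : Euc d) :
    Wfun s r (Qset d) {0, vv hd N} T ξ =
      ((r ^ 2 * ‖ξ‖ : ℝ) : ℂ) *
        ((termF s T 0 0 ξ + termF s T 0 (vv hd N) ξ) +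
          (termF s T (vv hd N) 0 ξ + termF s T (vv hd N) (vv hd N) ξ)) := by
  have h0v := zero_ne_vv hd N hN
  rw [Wfun]
  have hco : r ^ 2 * ((volume (Qset d)).toReal)⁻¹ * ‖ξ‖ = r ^ 2 * ‖ξ‖ := by
    rw [vol_Qset]; simp
  rw [hco]
  rw [Finset.sum_pair h0v]
  rw [Finset.sum_pair h0v, Finset.sum_pair h0v]
  rw [setD_eq 0, setD_eq (vv hd N)]
  rfl

include hd

lemma NN_pos (N : ℕ) (hN : (d : ℝ) + 2 ≤ N) : (0:ℝ) < N := by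
  have : (0:ℝ) ≤ d := Nat.cast_nonneg d
  linarith

lemma near_rpow_v (N : ℕ) (hN : (d : ℝ) + 2 ≤ N) (u : ℝ) (x : Euc d)
    (hx : ∀ i, |x i - vv hd N i| ≤ 1) :
    (N : ℝ) ^ (2 * u) * min ((1/4 : ℝ) ^ u) ((4 : ℝ) ^ u) ≤ (1 + ‖x‖ ^ 2) ^ u := by
  have hd1 : (1:ℝ) ≤ d := by exact_mod_cast hd
  have hNN0 : (0:ℝ) < N := NN_pos hd N hN
  have hb := near_v_bounds (vv_apply hd N) hd hN x hx
  refine le_trans ?_ (rpow_min_le (A := (N:ℝ)^2/4) (B := 4*(N:ℝ)^2) (by positivity) hb.1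
    (by linarith [hb.2]))
  have e1 : ((N:ℝ)^2/4)^u = (N:ℝ)^(2*u) * (1/4:ℝ)^u := by
    rw [show ((N:ℝ)^2/4) = (N:ℝ)^2 * (1/4) by ring,
      Real.mul_rpow (by positivity) (by norm_num), sq_rpow _ hNN0.le]
  have e2 : (4*(N:ℝ)^2)^u = (N:ℝ)^(2*u) * (4:ℝ)^u := by
    rw [show (4*(N:ℝ)^2) = (N:ℝ)^2 * 4 by ring,
      Real.mul_rpow (by positivity) (by norm_num), sq_rpow _ hNN0.le]
  rw [e1, e2]
  exact le_min (mul_le_mul_of_nonneg_left (min_le_left _ _) (by positivity))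
    (mul_le_mul_of_nonneg_left (min_le_right _ _) (by positivity))

lemma near_rpow_0 (u : ℝ) (x : Euc d) (hx : ∀ i, |x i| ≤ 1) :
    min 1 ((1 + (d:ℝ)) ^ u) ≤ (1 + ‖x‖ ^ 2) ^ u := by
  have h2 : ‖x‖^2 ≤ (d:ℝ) * 1^2 := normsq_le_of_comp x 1 hx
  have := rpow_min_le (A := (1:ℝ)) (B := 1 + (d:ℝ)) (y := 1 + ‖x‖^2) (t := u) one_pos
    (by nlinarith [sq_nonneg ‖x‖]) (by nlinarith)
  rwa [Real.one_rpow] at this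

lemma gF_factor_upper (s : ℝ) (N : ℕ) (hN : (d : ℝ) + 2 ≤ N) (x a : Euc d)
    (ha : a = 0 ∨ a = vv hd N) (hx : ∀ i, |x i - a i| ≤ 1) :
    (1 + ‖x‖ ^ 2) ^ (-s/2) ≤ max 1 ((4*(N:ℝ)^2) ^ (-s/2)) := by
  have hd1 : (1:ℝ) ≤ d := by exact_mod_cast hd
  have hup : 1 + ‖x‖^2 ≤ 4*(N:ℝ)^2 := by
    rcases ha with rfl | rfl
    · have hx' : ∀ i, |x i| ≤ 1 := by
        intro i; have := hx i
        simpa using this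
      have h2 : ‖x‖^2 ≤ (d:ℝ) * 1^2 := normsq_le_of_comp x 1 hx'
      nlinarith
    · exact (near_v_bounds (vv_apply hd N) hd hN x hx).2
  have := rpow_le_max (A := (1:ℝ)) (B := 4*(N:ℝ)^2) one_pos
    (by nlinarith [sq_nonneg ‖x‖]) hup (t := -s/2)
  rwa [Real.one_rpow] at this

lemma box_abs_le {x a : Euc d} {p q : ℝ} (h : x ∈ Box d a p q) (hp : -1 ≤ p) (hq : q ≤ 1) :
    ∀ i, |x i - a i| ≤ 1 := fun i =>
  abs_le.mpr ⟨by linarith [(h i).1], by linarith [(h i).2]⟩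

lemma boxD_sub_comps {x ξ a : Euc d} (h : x - ξ ∈ Box d a (-(1/2)) (1/2)) :
    ∀ i, |x i - ξ i - a i| ≤ 1 := by
  intro i
  have := h i
  simp only [PiLp.sub_apply] at this
  exact abs_le.mpr ⟨by linarith [this.1], by linarith [this.2]⟩

lemma term_vanish (s T : ℝ) (N : ℕ) (hN : (d:ℝ) + 2 ≤ N) (η₁ η₂ a : Euc d)
    (hΔ : (N:ℝ) ≤ |η₁ ⟨0, hd⟩ - a ⟨0, hd⟩ - η₂ ⟨0, hd⟩|) (ξ : Euc d)
    (hξ : ξ ∈ Box d a (1/8) (3/16)) : termF s T η₁ η₂ ξ = 0 := by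
  have hd1 : (1:ℝ) ≤ d := by exact_mod_cast hd
  refine term_eq_zero fun η hη hmem => ?_
  set i := (⟨0, hd⟩ : Fin d)
  have h1 := hη i
  have h2 := hmem i
  simp only [PiLp.sub_apply, mem_Ioo] at h1 h2
  have h3 := hξ i
  simp only [mem_Ioo] at h3
  rcases le_abs.mp hΔ with h | h
  · linarith [h1.1, h1.2, h2.1, h2.2, h3.1, h3.2]
  · linarith [h1.1, h1.2, h2.1, h2.2, h3.1, h3.2]

lemma norm_le_of_sq_le {x : Euc d} {b : ℝ} (hb : 0 ≤ b) (h : ‖x‖^2 ≤ b^2) : ‖x‖ ≤ b := by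
  nlinarith [norm_nonneg x, sq_nonneg (‖x‖ - b), sq_nonneg (‖x‖ + b)]

lemma phi_bd_far (N : ℕ) (hN : (d:ℝ) + 2 ≤ N) (ξ η : Euc d)
    (hξ : ∀ i, |ξ i - vv hd N i| ≤ 1) (hη : ∀ i, |η i - vv hd N i| ≤ 1)
    (hηξ : ∀ i, |(η - ξ) i| ≤ 1) :
    |phiF ξ η| ≤ 10 * d * (N:ℝ)^2 := by
  have hd1 : (1:ℝ) ≤ d := by exact_mod_cast hd
  have hNN0 : (0:ℝ) < N := NN_pos hd N hN
  have hξ2 := (near_v_bounds (vv_apply hd N) hd hN ξ hξ).2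
  have hη2 := (near_v_bounds (vv_apply hd N) hd hN η hη).2
  have hξn : ‖ξ‖ ≤ 2 * N := norm_le_of_sq_le hd (by positivity) (by nlinarith)
  have hηξ2 : ‖η - ξ‖^2 ≤ (d:ℝ) * 1^2 := normsq_le_of_comp _ 1 hηξ
  rw [phiF, abs_le]
  constructor
  · nlinarith [norm_nonneg ξ, sq_nonneg ‖η - ξ‖]
  · nlinarith [sq_nonneg ‖η‖, norm_nonneg ξ]

lemma phi_bd_diag0 (N : ℕ) (hN : (d:ℝ) + 2 ≤ N) (ξ η : Euc d)
    (hξ : ∀ i, |ξ i| ≤ 1) (hη : ∀ i, |η i| ≤ 1) (hηξ : ∀ i, |(η - ξ) i| ≤ 1) :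
    |phiF ξ η| ≤ 10 * d * (N:ℝ) := by
  have hd1 : (1:ℝ) ≤ d := by exact_mod_cast hd
  have hNN0 : (0:ℝ) < N := NN_pos hd N hN
  have h1 : ‖ξ‖ ≤ (d:ℝ) * 1 := norm_le_of_comp hd ξ 1 zero_le_one hξ
  have h2 : ‖η‖^2 ≤ (d:ℝ) * 1^2 := normsq_le_of_comp η 1 hη
  have h3 : ‖η - ξ‖^2 ≤ (d:ℝ) * 1^2 := normsq_le_of_comp _ 1 hηξ
  rw [phiF, abs_le]
  constructor
  · nlinarith [norm_nonneg ξ, sq_nonneg ‖η - ξ‖]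
  · nlinarith [sq_nonneg ‖η‖, norm_nonneg ξ]

lemma phi_bd_diagv (N : ℕ) (hN : (d:ℝ) + 2 ≤ N) (ξ η : Euc d)
    (hξ : ∀ i, |ξ i| ≤ 1) (hη : ∀ i, |η i - vv hd N i| ≤ 1) :
    |phiF ξ η| ≤ 10 * d * (N:ℝ) := by
  have hd1 : (1:ℝ) ≤ d := by exact_mod_cast hd
  have hNN0 : (0:ℝ) < N := NN_pos hd N hN
  have h1 : ‖ξ‖ ≤ (d:ℝ) * 1 := norm_le_of_comp hd ξ 1 zero_le_one hξ
  have key : |‖η - ξ‖^2 - ‖η‖^2| ≤ (d:ℝ) * (2 * N + 3) := by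
    rw [norm_sq_eq, norm_sq_eq, ← Finset.sum_sub_distrib]
    refine le_trans (Finset.abs_sum_le_sum_abs _ _) ?_
    calc ∑ i, |((η - ξ) i)^2 - (η i)^2| ≤ ∑ _i : Fin d, (2 * (N:ℝ) + 3) := by
          refine Finset.sum_le_sum fun i _ => ?_
          have hv : |vv hd N i| ≤ N := by
            rw [vv_apply]; by_cases hi : i = (⟨0, hd⟩ : Fin d) <;>
              simp [hi, abs_of_nonneg, Nat.cast_nonneg]
          have hηi : |η i| ≤ (N:ℝ) + 1 := by
            have := abs_sub_abs_le_abs_sub (η i) (vv hd N i)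
            linarith [hη i, abs_sub_comm (η i) (vv hd N i) ▸ hη i]
          have hsub : (η - ξ) i = η i - ξ i := by simp [PiLp.sub_apply]
          rw [hsub]
          have hξi := abs_le.mp (hξ i)
          have hηi' := abs_le.mp hηi
          rw [abs_le]
          constructor <;> nlinarith [hξi.1, hξi.2, hηi'.1, hηi'.2]
      _ = (d:ℝ) * (2 * N + 3) := by
          rw [Finset.sum_const, Finset.card_univ]; simp; ring
  have hphi : phiF ξ η = ‖ξ‖ + (‖η - ξ‖^2 - ‖η‖^2) := by rw [phiF]; ring
  rw [hphi]
  have := abs_le.mp key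
  rw [abs_le]
  constructor
  · nlinarith [norm_nonneg ξ]
  · nlinarith [norm_nonneg ξ]

lemma euc_zero_apply (i : Fin d) : (0 : Euc d) i = 0 := rfl

lemma box_zero_comps {x : Euc d} (h : x ∈ Box d 0 (-(1/2)) (1/2)) : ∀ i, |x i| ≤ 1 := by
  intro i
  have := box_abs_le hd h (by norm_num) (by norm_num) i
  rwa [euc_zero_apply hd, sub_zero] at this

lemma sub_comps_zero {x ξ : Euc d} (h : x - ξ ∈ Box d 0 (-(1/2)) (1/2)) :
    ∀ i, |(x - ξ) i| ≤ 1 := by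
  intro i
  have := boxD_sub_comps hd h i
  simpa [PiLp.sub_apply] using this

lemma sub_comps_v {N : ℕ} {x ξ : Euc d} (h : x - ξ ∈ Box d (vv hd N) (-(1/2)) (1/2)) :
    ∀ i, |(x - ξ) i - vv hd N i| ≤ 1 := by
  intro i
  have := boxD_sub_comps hd h i
  simpa [PiLp.sub_apply] using this

lemma W_re_far (s T : ℝ) (N : ℕ) (hN : (d:ℝ) + 2 ≤ N) (hT : 0 < T)
    (hTN : T * (10 * d * (N:ℝ)^2) ≤ 1) (r : ℝ) (ξ : Euc d)
    (hξ : ξ ∈ Box d (vv hd N) (1/8) (3/16)) :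
    r^2 * ((N:ℝ) * (((N:ℝ)^(-s) * min ((1/4:ℝ)^(-s/2)) ((4:ℝ)^(-s/2)) *
        min 1 ((1+(d:ℝ))^(-s/2))) * (T/2) * (1/8)^d)) ≤
      (Wfun s r (Qset d) {0, vv hd N} T ξ).re := by
  have hd1 : (1:ℝ) ≤ d := by exact_mod_cast hd
  have hNN0 : (0:ℝ) < N := NN_pos hd N hN
  have hN1 : 1 ≤ N := by exact_mod_cast (by linarith : (1:ℝ) ≤ N)
  set i0 := (⟨0, hd⟩ : Fin d)
  set v := vv hd N with hvdef
  have hv0 : v i0 = N := by rw [hvdef, vv_apply, if_pos rfl]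
  set c2 := min ((1/4:ℝ)^(-s/2)) ((4:ℝ)^(-s/2)) with hc2
  set c0 := min 1 ((1+(d:ℝ))^(-s/2)) with hc0
  have hc2p : 0 < c2 := lt_min (Real.rpow_pos_of_pos (by norm_num) _) (Real.rpow_pos_of_pos (by norm_num) _)
  have hc0p : 0 < c0 := lt_min one_pos (Real.rpow_pos_of_pos (by linarith) _)
  have hz00 : termF s T (0:Euc d) 0 ξ = 0 := by
    refine term_vanish hd s T N hN 0 0 v ?_ ξ hξ
    rw [euc_zero_apply hd, hv0]
    rw [show (0:ℝ) - (N:ℝ) - 0 = -(N:ℝ) by ring, abs_neg, abs_of_nonneg hNN0.le]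
  have hz0v : termF s T (0:Euc d) v ξ = 0 := by
    refine term_vanish hd s T N hN 0 v v ?_ ξ hξ
    rw [euc_zero_apply hd, hv0]
    rw [show (0:ℝ) - (N:ℝ) - N = -(2*(N:ℝ)) by ring, abs_neg, abs_of_nonneg (by linarith)]
    linarith
  have hzvv : termF s T v v ξ = 0 := by
    refine term_vanish hd s T N hN v v v ?_ ξ hξ
    rw [hv0]
    rw [show (N:ℝ) - (N:ℝ) - N = -(N:ℝ) by ring, abs_neg, abs_of_nonneg hNN0.le]
  set MX := max 1 ((4*(N:ℝ)^2)^(-s/2)) with hMX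
  have hMX0 : 0 ≤ MX := le_trans zero_le_one (le_max_left _ _)
  have hξc : ∀ i, |ξ i - v i| ≤ 1 := box_abs_le hd hξ (by norm_num) (by norm_num)
  have hM : ∀ η ∈ Box d v (-(1/2)) (1/2), η - ξ ∈ Box d (0:Euc d) (-(1/2)) (1/2) →
      gF s ξ η ≤ MX * MX := by
    intro η hη hmem
    have h1 := gF_factor_upper hd s N hN η v (Or.inr rfl)
      (box_abs_le hd hη (by norm_num) (by norm_num))
    have h2 := gF_factor_upper hd s N hN (η - ξ) 0 (Or.inl rfl)
      (by intro i; have := sub_comps_zero hd hmem i; simpa [euc_zero_apply hd] using this)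
    exact mul_le_mul h1 h2 (Real.rpow_pos_of_pos (by positivity) _).le hMX0
  have hΦ : ∀ η ∈ Box d v (-(1/2)) (1/2), η - ξ ∈ Box d (0:Euc d) (-(1/2)) (1/2) →
      |phiF ξ η| * T ≤ 1 := by
    intro η hη hmem
    have hb := phi_bd_far hd N hN ξ η hξc (box_abs_le hd hη (by norm_num) (by norm_num))
      (sub_comps_zero hd hmem)
    calc |phiF ξ η| * T ≤ (10 * d * (N:ℝ)^2) * T :=
          mul_le_mul_of_nonneg_right hb hT.le
      _ ≤ 1 := by rw [mul_comm]; exact hTN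
  have hsub : ∀ η ∈ Box d v 0 (1/8), η - ξ ∈ Box d (0:Euc d) (-(1/2)) (1/2) := by
    intro η hη i
    have h1 := hη i
    have h2 := hξ i
    simp only [mem_Ioo] at h1 h2 ⊢
    rw [PiLp.sub_apply, euc_zero_apply hd, sub_zero]
    constructor <;> [linarith [h1.1, h2.2]; linarith [h1.2, h2.1]]
  have hg : ∀ η ∈ Box d v 0 (1/8), ((N:ℝ)^(-s) * c2) * c0 ≤ gF s ξ η := by
    intro η hη
    have hηc : ∀ i, |η i - v i| ≤ 1 := by
      intro i; have := hη i
      exact abs_le.mpr ⟨by linarith [this.1], by linarith [this.2]⟩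
    have h1 : (N:ℝ)^(-s) * c2 ≤ (1 + ‖η‖^2)^(-s/2) := by
      have := near_rpow_v hd N hN (-s/2) η hηc
      rwa [show 2 * (-s/2) = -s by ring] at this
    have h2 : c0 ≤ (1 + ‖η - ξ‖^2)^(-s/2) := by
      refine near_rpow_0 hd (-s/2) (η - ξ) ?_
      intro i
      have ha := hη i
      have hb := hξ i
      simp only [mem_Ioo] at ha hb
      rw [PiLp.sub_apply]
      refine abs_le.mpr ⟨by linarith [ha.1, hb.2], by linarith [ha.2, hb.1]⟩
    rw [gF]
    exact mul_le_mul h1 h2 hc0p.le (Real.rpow_pos_of_pos (by positivity) _).le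
  have hLB0 : 0 ≤ ((N:ℝ)^(-s) * c2 * c0) * (T/2) * (1/8)^d := by positivity
  have h5 := term_re_ge hT (mul_nonneg hMX0 hMX0) hM hΦ
    (by positivity : (0:ℝ) ≤ (N:ℝ)^(-s) * c2 * c0) hsub hg
  have hNle : (N:ℝ) ≤ ‖ξ‖ := by
    have h6 := hξ i0
    simp only [mem_Ioo] at h6
    have h7 : (N:ℝ) ≤ ξ i0 := by rw [hv0] at h6; linarith [h6.1]
    exact le_trans h7 (le_trans (le_abs_self _) (comp_le_norm ξ i0))
  rw [Wfun_eq hd s r T N hN1 ξ, Complex.re_ofReal_mul, hz00, hz0v, hzvv]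
  simp only [zero_add, add_zero]
  calc r^2 * ((N:ℝ) * (((N:ℝ)^(-s) * c2 * c0) * (T/2) * (1/8)^d))
      ≤ r^2 * (‖ξ‖ * (termF s T v 0 ξ).re) := by
        refine mul_le_mul_of_nonneg_left ?_ (sq_nonneg r)
        exact mul_le_mul hNle h5 hLB0 (norm_nonneg ξ)
    _ = r^2 * ‖ξ‖ * (termF s T v 0 ξ).re := by ring

lemma W_re_near (s T : ℝ) (N : ℕ) (hN : (d:ℝ) + 2 ≤ N) (hT : 0 < T)
    (hTN : T * (10 * d * (N:ℝ)) ≤ 1) (r : ℝ) (ξ : Euc d)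
    (hξ : ξ ∈ Box d (0:Euc d) (1/8) (3/16)) :
    r^2 * ((1/8) * ((((N:ℝ)^(-s) * min ((1/4:ℝ)^(-s/2)) ((4:ℝ)^(-s/2)))^2) * (T/2) * (1/8)^d)) ≤
      (Wfun s r (Qset d) {0, vv hd N} T ξ).re := by
  have hd1 : (1:ℝ) ≤ d := by exact_mod_cast hd
  have hNN0 : (0:ℝ) < N := NN_pos hd N hN
  have hN1 : 1 ≤ N := by exact_mod_cast (by linarith : (1:ℝ) ≤ N)
  set i0 := (⟨0, hd⟩ : Fin d)
  set v := vv hd N with hvdef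
  have hv0 : v i0 = N := by rw [hvdef, vv_apply, if_pos rfl]
  set c2 := min ((1/4:ℝ)^(-s/2)) ((4:ℝ)^(-s/2)) with hc2
  have hc2p : 0 < c2 := lt_min (Real.rpow_pos_of_pos (by norm_num) _) (Real.rpow_pos_of_pos (by norm_num) _)
  have hξc : ∀ i, |ξ i| ≤ 1 := by
    intro i
    have := box_abs_le hd hξ (by norm_num) (by norm_num) i
    rwa [euc_zero_apply hd, sub_zero] at this
  have hz0v : termF s T (0:Euc d) v ξ = 0 := by
    refine term_vanish hd s T N hN 0 v 0 ?_ ξ hξ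
    rw [euc_zero_apply hd, hv0]
    rw [show (0:ℝ) - 0 - (N:ℝ) = -(N:ℝ) by ring, abs_neg, abs_of_nonneg hNN0.le]
  have hzv0 : termF s T v (0:Euc d) ξ = 0 := by
    refine term_vanish hd s T N hN v 0 0 ?_ ξ hξ
    rw [euc_zero_apply hd, hv0]
    rw [show (N:ℝ) - 0 - 0 = (N:ℝ) by ring, abs_of_nonneg hNN0.le]
  set MX := max 1 ((4*(N:ℝ)^2)^(-s/2)) with hMX
  have hMX0 : 0 ≤ MX := le_trans zero_le_one (le_max_left _ _)
  -- re t00 nonneg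
  have hM00 : ∀ η ∈ Box d (0:Euc d) (-(1/2)) (1/2), η - ξ ∈ Box d (0:Euc d) (-(1/2)) (1/2) →
      gF s ξ η ≤ MX * MX := by
    intro η hη hmem
    have h1 := gF_factor_upper hd s N hN η 0 (Or.inl rfl)
      (box_abs_le hd hη (by norm_num) (by norm_num))
    have h2 := gF_factor_upper hd s N hN (η - ξ) 0 (Or.inl rfl)
      (by intro i; have := sub_comps_zero hd hmem i; simpa [euc_zero_apply hd] using this)
    exact mul_le_mul h1 h2 (Real.rpow_pos_of_pos (by positivity) _).le hMX0
  have hΦ00 : ∀ η ∈ Box d (0:Euc d) (-(1/2)) (1/2), η - ξ ∈ Box d (0:Euc d) (-(1/2)) (1/2) →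
      |phiF ξ η| * T ≤ 1 := by
    intro η hη hmem
    have hb := phi_bd_diag0 hd N hN ξ η hξc (box_zero_comps hd hη) (sub_comps_zero hd hmem)
    calc |phiF ξ η| * T ≤ (10 * d * (N:ℝ)) * T := mul_le_mul_of_nonneg_right hb hT.le
      _ ≤ 1 := by rw [mul_comm]; exact hTN
  have h00 := term_re_nonneg hT (mul_nonneg hMX0 hMX0) hM00 hΦ00
  -- re tvv lower bound
  have hMvv : ∀ η ∈ Box d v (-(1/2)) (1/2), η - ξ ∈ Box d v (-(1/2)) (1/2) →
      gF s ξ η ≤ MX * MX := by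
    intro η hη hmem
    have h1 := gF_factor_upper hd s N hN η v (Or.inr rfl)
      (box_abs_le hd hη (by norm_num) (by norm_num))
    have h2 := gF_factor_upper hd s N hN (η - ξ) v (Or.inr rfl) (sub_comps_v hd hmem)
    exact mul_le_mul h1 h2 (Real.rpow_pos_of_pos (by positivity) _).le hMX0
  have hΦvv : ∀ η ∈ Box d v (-(1/2)) (1/2), η - ξ ∈ Box d v (-(1/2)) (1/2) →
      |phiF ξ η| * T ≤ 1 := by
    intro η hη _
    have hb := phi_bd_diagv hd N hN ξ η hξc (box_abs_le hd hη (by norm_num) (by norm_num))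
    calc |phiF ξ η| * T ≤ (10 * d * (N:ℝ)) * T := mul_le_mul_of_nonneg_right hb hT.le
      _ ≤ 1 := by rw [mul_comm]; exact hTN
  have hsub : ∀ η ∈ Box d v 0 (1/8), η - ξ ∈ Box d v (-(1/2)) (1/2) := by
    intro η hη i
    have h1 := hη i
    have h2 := hξ i
    simp only [mem_Ioo] at h1 h2 ⊢
    rw [PiLp.sub_apply]
    rw [euc_zero_apply hd, sub_zero] at h2
    constructor <;> [linarith [h1.1, h2.2]; linarith [h1.2, h2.1]]
  have hg : ∀ η ∈ Box d v 0 (1/8), ((N:ℝ)^(-s) * c2) * ((N:ℝ)^(-s) * c2) ≤ gF s ξ η := by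
    intro η hη
    have hηc : ∀ i, |η i - v i| ≤ 1 := by
      intro i; have := hη i
      exact abs_le.mpr ⟨by linarith [this.1], by linarith [this.2]⟩
    have h1 : (N:ℝ)^(-s) * c2 ≤ (1 + ‖η‖^2)^(-s/2) := by
      have := near_rpow_v hd N hN (-s/2) η hηc
      rwa [show 2 * (-s/2) = -s by ring] at this
    have h2 : (N:ℝ)^(-s) * c2 ≤ (1 + ‖η - ξ‖^2)^(-s/2) := by
      have hc : ∀ i, |(η - ξ) i - v i| ≤ 1 := by
        intro i
        have ha := hη i
        have hb := hξ i
        simp only [mem_Ioo] at ha hb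
        rw [PiLp.sub_apply]
        rw [euc_zero_apply hd, sub_zero] at hb
        refine abs_le.mpr ⟨by linarith [ha.1, hb.2], by linarith [ha.2, hb.1]⟩
      have := near_rpow_v hd N hN (-s/2) (η - ξ) hc
      rwa [show 2 * (-s/2) = -s by ring] at this
    rw [gF]
    exact mul_le_mul h1 h2 (by positivity) (Real.rpow_pos_of_pos (by positivity) _).le
  have hLB0 : (0:ℝ) ≤ ((N:ℝ)^(-s) * c2)^2 * (T/2) * (1/8)^d := by positivity
  have h5 := term_re_ge hT (mul_nonneg hMX0 hMX0) hMvv hΦvv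
    (by positivity : (0:ℝ) ≤ ((N:ℝ)^(-s) * c2) * ((N:ℝ)^(-s) * c2)) hsub hg
  have h5' : ((N:ℝ)^(-s) * c2)^2 * (T/2) * (1/8)^d ≤ (termF s T v v ξ).re := by
    rw [sq]; exact h5
  have hNle : (1/8:ℝ) ≤ ‖ξ‖ := by
    have h6 := hξ i0
    simp only [mem_Ioo] at h6
    rw [euc_zero_apply hd, sub_zero] at h6
    exact le_trans h6.1.le (le_trans (le_abs_self _) (comp_le_norm ξ i0))
  rw [Wfun_eq hd s r T N hN1 ξ, Complex.re_ofReal_mul, hz0v, hzv0]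
  simp only [zero_add, add_zero]
  have hsum : ((N:ℝ)^(-s) * c2)^2 * (T/2) * (1/8)^d ≤
      (termF s T 0 0 ξ + termF s T v v ξ).re := by
    rw [Complex.add_re]
    linarith [h00, h5']
  calc r^2 * ((1/8) * ((((N:ℝ)^(-s) * c2)^2) * (T/2) * (1/8)^d))
      ≤ r^2 * (‖ξ‖ * (termF s T 0 0 ξ + termF s T v v ξ).re) := by
        refine mul_le_mul_of_nonneg_left ?_ (sq_nonneg r)
        exact mul_le_mul hNle hsum hLB0 (norm_nonneg ξ)
    _ = r^2 * ‖ξ‖ * (termF s T 0 0 ξ + termF s T v v ξ).re := by ring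

lemma term_zero_far (s T : ℝ) (N : ℕ) {η₁ η₂ : Euc d} (h₁ : ∀ i, |η₁ i| ≤ (N:ℝ))
    (h₂ : ∀ i, |η₂ i| ≤ (N:ℝ)) {ξ : Euc d} (hξ : (d:ℝ) * (2*N+2) < ‖ξ‖) :
    termF s T η₁ η₂ ξ = 0 := by
  refine term_eq_zero fun η hη hmem => absurd hξ (not_lt.mpr ?_)
  refine norm_le_of_comp hd ξ (2*(N:ℝ)+2) (by positivity) ?_
  intro i
  have ha := abs_le.mp (box_abs_le hd hη (by norm_num) (by norm_num) i)
  have hb := abs_le.mp (boxD_sub_comps hd hmem i)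
  have hc := abs_le.mp (h₁ i)
  have he := abs_le.mp (h₂ i)
  refine abs_le.mpr ⟨?_, ?_⟩ <;>
    [linarith [ha.1, hb.2, hc.1, he.2]; linarith [ha.2, hb.1, hc.2, he.1]]

lemma W_aesm (s r T : ℝ) (N : ℕ) (hN1 : 1 ≤ N) :
    AEStronglyMeasurable (fun ξ => Wfun s r (Qset d) {0, vv hd N} T ξ) volume := by
  have heq : (fun ξ => Wfun s r (Qset d) {0, vv hd N} T ξ) = fun ξ =>
      ((r^2 * ‖ξ‖ : ℝ) : ℂ) * ((termF s T 0 0 ξ + termF s T 0 (vv hd N) ξ) +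
        (termF s T (vv hd N) 0 ξ + termF s T (vv hd N) (vv hd N) ξ)) :=
    funext (Wfun_eq hd s r T N hN1)
  rw [heq]
  have hco : Continuous fun ξ : Euc d => ((r^2 * ‖ξ‖ : ℝ) : ℂ) := by fun_prop
  exact hco.aestronglyMeasurable.mul
    (((aesm_term s T 0 0).add (aesm_term s T 0 _)).add
      ((aesm_term s T _ 0).add (aesm_term s T _ _)))

lemma F_integrable (l s r T : ℝ) (N : ℕ) (hN : (d:ℝ) + 2 ≤ N) (hT : 0 < T) :
    Integrable (fun ξ : Euc d =>
      (1 + ‖ξ‖^2)^l * ‖Wfun s r (Qset d) {0, vv hd N} T ξ‖^2) volume := by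
  have hd1 : (1:ℝ) ≤ d := by exact_mod_cast hd
  have hNN0 : (0:ℝ) < N := NN_pos hd N hN
  have hN1 : 1 ≤ N := by exact_mod_cast (by linarith : (1:ℝ) ≤ N)
  set v := vv hd N with hvdef
  set R : ℝ := (d:ℝ) * (2*N+2) with hRdef
  have hR0 : 0 < R := by positivity
  set MX := max 1 ((4*(N:ℝ)^2)^(-s/2)) with hMX
  have hMX0 : (0:ℝ) ≤ MX := le_trans zero_le_one (le_max_left _ _)
  have hWm := W_aesm hd s r T N hN1
  have hFm : AEStronglyMeasurable (fun ξ : Euc d =>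
      (1 + ‖ξ‖^2)^l * ‖Wfun s r (Qset d) {0, vv hd N} T ξ‖^2) volume := by
    have h1 : Continuous fun ξ : Euc d => (1 + ‖ξ‖^2)^l :=
      Continuous.rpow_const (by fun_prop) (fun ξ => Or.inl (by positivity))
    have heq : (fun ξ : Euc d => (1 + ‖ξ‖^2)^l * ‖Wfun s r (Qset d) {0, vv hd N} T ξ‖^2)
        = fun ξ => (1 + ‖ξ‖^2)^l * (‖Wfun s r (Qset d) {0, vv hd N} T ξ‖ *
            ‖Wfun s r (Qset d) {0, vv hd N} T ξ‖) := by
      funext ξ; ring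
    rw [heq]
    exact h1.aestronglyMeasurable.mul (hWm.norm.mul hWm.norm)
  have hv_comp : ∀ i, |v i| ≤ (N:ℝ) := by
    intro i
    have := norm_v_le (vv_apply hd N) i
    rwa [abs_of_nonneg hNN0.le] at this
  have h0_comp : ∀ i, |(0:Euc d) i| ≤ (N:ℝ) := by
    intro i; rw [euc_zero_apply hd]; simpa using hNN0.le
  have hMter : ∀ (η₁ η₂ : Euc d), (η₁ = 0 ∨ η₁ = v) → (η₂ = 0 ∨ η₂ = v) → ∀ ξ : Euc d,
      ‖termF s T η₁ η₂ ξ‖ ≤ MX * MX * T := by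
    intro η₁ η₂ h₁ h₂ ξ
    refine term_norm_le hT.le (mul_nonneg hMX0 hMX0) ?_
    intro η hη hmem
    have f1 := gF_factor_upper hd s N hN η η₁ h₁ (box_abs_le hd hη (by norm_num) (by norm_num))
    have f2 := gF_factor_upper hd s N hN (η - ξ) η₂ h₂
      (fun i => by have := boxD_sub_comps hd hmem i; simpa [PiLp.sub_apply] using this)
    exact mul_le_mul f1 f2 (Real.rpow_pos_of_pos (by positivity) _).le hMX0
  set CW := r^2 * R * (4 * (MX * MX * T)) with hCW
  have hCW0 : 0 ≤ CW := by positivity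
  have hWbound : ∀ ξ : Euc d, ‖ξ‖ ≤ R → ‖Wfun s r (Qset d) {0, v} T ξ‖ ≤ CW := by
    intro ξ hξR
    rw [Wfun_eq hd s r T N hN1 ξ, norm_mul, Complex.norm_real, Real.norm_eq_abs,
      abs_of_nonneg (by positivity)]
    have hsum : ‖(termF s T 0 0 ξ + termF s T 0 v ξ) + (termF s T v 0 ξ + termF s T v v ξ)‖
        ≤ 4 * (MX * MX * T) := by
      calc ‖(termF s T 0 0 ξ + termF s T 0 v ξ) + (termF s T v 0 ξ + termF s T v v ξ)‖
          ≤ ‖termF s T 0 0 ξ‖ + ‖termF s T 0 v ξ‖ + (‖termF s T v 0 ξ‖ + ‖termF s T v v ξ‖) :=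
            le_trans (norm_add_le _ _) (by
              gcongr <;> exact norm_add_le _ _)
        _ ≤ 4 * (MX * MX * T) := by
            have t1 := hMter 0 0 (Or.inl rfl) (Or.inl rfl) ξ
            have t2 := hMter 0 v (Or.inl rfl) (Or.inr rfl) ξ
            have t3 := hMter v 0 (Or.inr rfl) (Or.inl rfl) ξ
            have t4 := hMter v v (Or.inr rfl) (Or.inr rfl) ξ
            linarith
    have hr2 : r^2 * ‖ξ‖ ≤ r^2 * R := mul_le_mul_of_nonneg_left hξR (sq_nonneg r)
    calc r^2 * ‖ξ‖ * ‖(termF s T 0 0 ξ + termF s T 0 v ξ) + (termF s T v 0 ξ + termF s T v v ξ)‖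
        ≤ (r^2 * R) * (4 * (MX * MX * T)) :=
          mul_le_mul hr2 hsum (norm_nonneg _) (by positivity)
      _ = CW := by rw [hCW]
  have hWzero : ∀ ξ : Euc d, R < ‖ξ‖ → Wfun s r (Qset d) {0, v} T ξ = 0 := by
    intro ξ h
    rw [Wfun_eq hd s r T N hN1 ξ]
    rw [term_zero_far hd s T N h0_comp h0_comp h, term_zero_far hd s T N h0_comp hv_comp h,
      term_zero_far hd s T N hv_comp h0_comp h, term_zero_far hd s T N hv_comp hv_comp h]
    simp
  set CF := (max 1 ((1+R^2)^l)) * CW^2 with hCF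
  refine Integrable.mono'
    (g := fun ξ => Set.indicator (Metric.closedBall (0:Euc d) R) (fun _ => CF) ξ) ?_ hFm ?_
  · exact (integrable_indicator_iff measurableSet_closedBall).mpr
      (integrableOn_const measure_closedBall_lt_top.ne)
  · refine Filter.Eventually.of_forall fun ξ => ?_
    rw [Real.norm_eq_abs, abs_of_nonneg (by positivity)]
    show _ ≤ (Metric.closedBall (0:Euc d) R).indicator (fun _ => CF) ξ
    by_cases hball : ξ ∈ Metric.closedBall (0:Euc d) R
    · rw [Set.indicator_of_mem hball]
      have hξR : ‖ξ‖ ≤ R := by rwa [Metric.mem_closedBall, dist_zero_right] at hball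
      have h1 : (1+‖ξ‖^2)^l ≤ max 1 ((1+R^2)^l) := by
        have := rpow_le_max (A := (1:ℝ)) (B := 1+R^2) (y := 1 + ‖ξ‖^2) (t := l) one_pos
          (by nlinarith [sq_nonneg ‖ξ‖]) (by nlinarith [norm_nonneg ξ])
        rwa [Real.one_rpow] at this
      have h2 : ‖Wfun s r (Qset d) {0, v} T ξ‖^2 ≤ CW^2 :=
        pow_le_pow_left₀ (norm_nonneg _) (hWbound ξ hξR) 2
      exact mul_le_mul h1 h2 (by positivity) (le_trans zero_le_one (le_max_left _ _))
    · have hout : R < ‖ξ‖ := by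
        rwa [Metric.mem_closedBall, dist_zero_right, not_le] at hball
      rw [Set.indicator_of_notMem hball, hWzero ξ hout]
      simp

end Main

lemma sqrt_step {X I : ℝ} (hX : 0 ≤ X) (h : X^2 ≤ I) : X ≤ I ^ (1/2 : ℝ) := by
  have h1 : X = (X^2) ^ (1/2 : ℝ) := by
    rw [← Real.rpow_natCast X 2, ← Real.rpow_mul hX]; norm_num
  rw [h1]
  exact Real.rpow_le_rpow (by positivity) h (by norm_num)

theorem statement_16 (d : ℕ) (hd : 0 < d) (s l : ℝ) :
    ∃ c : ℝ, 0 < c ∧ ∃ N₀ : ℕ, ∀ N : ℕ, N₀ ≤ N →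
      (∀ T : ℝ, 0 < T → T ≤ c * (N : ℝ) ^ (-(2 : ℝ)) →
        c * (((Real.log N) ^ 2)⁻¹) ^ 2 * T * (N : ℝ) ^ (l - s + 1) ≤
          (∫ ξ, (1 + ‖ξ‖ ^ 2) ^ l *
              ‖Wfun s (((Real.log N) ^ 2)⁻¹)
                {ξ : EuclideanSpace ℝ (Fin d) | ∀ i, |ξ i| < 1 / 2}
                {0, (N : ℝ) • EuclideanSpace.single (⟨0, hd⟩ : Fin d) (1 : ℝ)} T ξ‖ ^ 2) ^
            (1 / 2 : ℝ)) ∧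
      (∀ T : ℝ, 0 < T → T ≤ c * (N : ℝ) ^ (-(1 : ℝ)) →
        c * (((Real.log N) ^ 2)⁻¹) ^ 2 * T * (N : ℝ) ^ (-(2 * s)) ≤
          (∫ ξ, (1 + ‖ξ‖ ^ 2) ^ l *
              ‖Wfun s (((Real.log N) ^ 2)⁻¹)
                {ξ : EuclideanSpace ℝ (Fin d) | ∀ i, |ξ i| < 1 / 2}
                {0, (N : ℝ) • EuclideanSpace.single (⟨0, hd⟩ : Fin d) (1 : ℝ)} T ξ‖ ^ 2) ^
            (1 / 2 : ℝ)) := by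
  have hd0 : (0:ℝ) < d := by exact_mod_cast hd
  set c2 := min ((1/4:ℝ)^(-s/2)) ((4:ℝ)^(-s/2)) with hc2def
  set c0 := min 1 ((1+(d:ℝ))^(-s/2)) with hc0def
  set cL := min ((1/4:ℝ)^l) ((4:ℝ)^l) with hcLdef
  set cL0 := min 1 ((1+(d:ℝ))^l) with hcL0def
  have hc2p : 0 < c2 := lt_min (Real.rpow_pos_of_pos (by norm_num) _)
    (Real.rpow_pos_of_pos (by norm_num) _)
  have hc0p : 0 < c0 := lt_min one_pos (Real.rpow_pos_of_pos (by linarith) _)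
  have hcLp : 0 < cL := lt_min (Real.rpow_pos_of_pos (by norm_num) _)
    (Real.rpow_pos_of_pos (by norm_num) _)
  have hcL0p : 0 < cL0 := lt_min one_pos (Real.rpow_pos_of_pos (by linarith) _)
  set K1 := cL * (c2*c0*(1/2)*((1/8:ℝ)^d))^2 * ((1/16:ℝ)^d) with hK1def
  set K2 := cL0 * ((1/8:ℝ)*((1/2)*c2^2*((1/8:ℝ)^d)))^2 * ((1/16:ℝ)^d) with hK2def
  have hK1p : 0 < K1 := by
    refine mul_pos (mul_pos hcLp (pow_pos ?_ 2)) (by positivity)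
    positivity
  have hK2p : 0 < K2 := by
    refine mul_pos (mul_pos hcL0p (pow_pos ?_ 2)) (by positivity)
    positivity
  set cc := min (min (Real.sqrt K1) (Real.sqrt K2)) (min (1/(10*(d:ℝ))) 1) with hccdef
  have hccp : 0 < cc := lt_min (lt_min (Real.sqrt_pos.mpr hK1p) (Real.sqrt_pos.mpr hK2p))
    (lt_min (by positivity) one_pos)
  refine ⟨cc, hccp, d + 3, fun N hNge => ?_⟩
  have hN : (d:ℝ) + 2 ≤ N := by
    have : ((d:ℝ) + 3) ≤ N := by exact_mod_cast hNge
    linarith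
  have hNN0 : (0:ℝ) < N := NN_pos hd N hN
  have hN1 : 1 ≤ N := by exact_mod_cast (by linarith : (1:ℝ) ≤ N)
  set r := ((Real.log N)^2)⁻¹ with hrdef
  have hcsq1 : cc^2 ≤ K1 := by
    have h1 : cc ≤ Real.sqrt K1 := le_trans (min_le_left _ _) (min_le_left _ _)
    calc cc^2 ≤ (Real.sqrt K1)^2 := pow_le_pow_left₀ hccp.le h1 2
      _ = K1 := Real.sq_sqrt hK1p.le
  have hcsq2 : cc^2 ≤ K2 := by
    have h1 : cc ≤ Real.sqrt K2 := le_trans (min_le_left _ _) (min_le_right _ _)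
    calc cc^2 ≤ (Real.sqrt K2)^2 := pow_le_pow_left₀ hccp.le h1 2
      _ = K2 := Real.sq_sqrt hK2p.le
  have hcc10 : cc ≤ 1/(10*(d:ℝ)) := le_trans (min_le_right _ _) (min_le_left _ _)
  constructor
  · -- case (i)
    intro T hT hTc
    have hrw2 : (N:ℝ)^(-(2:ℝ)) = ((N:ℝ)^2)⁻¹ := by
      rw [Real.rpow_neg hNN0.le, show ((2:ℝ)) = ((2:ℕ):ℝ) by norm_num, Real.rpow_natCast]
    have hT10 : T * (10*(d:ℝ)*(N:ℝ)^2) ≤ 1 := by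
      have h1 : T ≤ (1/(10*(d:ℝ))) * ((N:ℝ)^2)⁻¹ := by
        rw [hrw2] at hTc
        exact le_trans hTc (mul_le_mul_of_nonneg_right hcc10 (by positivity))
      calc T * (10*(d:ℝ)*(N:ℝ)^2)
          ≤ ((1/(10*(d:ℝ))) * ((N:ℝ)^2)⁻¹) * (10*(d:ℝ)*(N:ℝ)^2) :=
            mul_le_mul_of_nonneg_right h1 (by positivity)
        _ = 1 := by field_simp
    set LB1 := r^2 * ((N:ℝ) * (((N:ℝ)^(-s) * c2 * c0) * (T/2) * ((1/8:ℝ))^d)) with hLB1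
    have hLB1nn : 0 ≤ LB1 := by
      refine mul_nonneg (sq_nonneg r) (mul_nonneg hNN0.le (mul_nonneg (mul_nonneg
        (mul_nonneg (mul_nonneg (Real.rpow_pos_of_pos hNN0 _).le hc2p.le) hc0p.le)
        (by linarith)) (by positivity)))
    have hptw : ∀ ξ ∈ Box d (vv hd N) (1/8) (3/16),
        (N:ℝ)^(2*l) * cL * LB1^2 ≤
          (1+‖ξ‖^2)^l * ‖Wfun s r (Qset d) {0, vv hd N} T ξ‖^2 := by
      intro ξ hξ
      have hre := W_re_far hd s T N hN hT hT10 r ξ hξ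
      have hsq : LB1^2 ≤ ‖Wfun s r (Qset d) {0, vv hd N} T ξ‖^2 := by
        have hb : |(Wfun s r (Qset d) {0, vv hd N} T ξ).re| ≤
            ‖Wfun s r (Qset d) {0, vv hd N} T ξ‖ := by
          exact Complex.abs_re_le_norm _
        exact pow_le_pow_left₀ hLB1nn (le_trans (le_trans hre (le_abs_self _)) hb) 2
      have hL := near_rpow_v hd N hN l ξ (box_abs_le hd hξ (by norm_num) (by norm_num))
      exact mul_le_mul hL hsq (by positivity) (Real.rpow_pos_of_pos (by positivity) l).le
    have hint := F_integrable hd l s r T N hN hT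
    have hvolA : (volume (Box d (vv hd N) (1/8) (3/16))).toReal = (1/16:ℝ)^d := by
      rw [volume_box, ← ENNReal.ofReal_pow (by norm_num), ENNReal.toReal_ofReal (by positivity)]
      norm_num
    have hAfin : volume (Box d (vv hd N) (1/8) (3/16)) ≠ ⊤ := by
      rw [volume_box]; exact ENNReal.pow_ne_top ENNReal.ofReal_ne_top
    have hIlow : ((N:ℝ)^(2*l) * cL * LB1^2) * ((1/16:ℝ)^d) ≤
        ∫ ξ, (1+‖ξ‖^2)^l * ‖Wfun s r (Qset d) {0, vv hd N} T ξ‖^2 := by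
      rw [← hvolA]
      refine le_trans (setIntegral_ge_of_const_le_real (measurableSet_box _ _ _) hAfin hptw
        hint.integrableOn)
        (setIntegral_le_integral hint (Filter.Eventually.of_forall fun ξ => ?_))
      positivity
    have hNpow : ((N:ℝ)^(l-s+1))^2 = (N:ℝ)^(2*l) * ((N:ℝ)^2 * ((N:ℝ)^(-s))^2) := by
      rw [rpow_sq _ hNN0, rpow_sq _ hNN0, ← Real.rpow_natCast (N:ℝ) 2,
        ← Real.rpow_add hNN0, ← Real.rpow_add hNN0]
      congr 1; push_cast; ring
    have key : (cc * r^2 * T * (N:ℝ)^(l-s+1))^2 ≤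
        ∫ ξ, (1+‖ξ‖^2)^l * ‖Wfun s r (Qset d) {0, vv hd N} T ξ‖^2 := by
      refine le_trans ?_ hIlow
      calc (cc * r^2 * T * (N:ℝ)^(l-s+1))^2
          = cc^2 * ((r^2*T)^2 * ((N:ℝ)^(l-s+1))^2) := by ring
        _ ≤ K1 * ((r^2*T)^2 * ((N:ℝ)^(l-s+1))^2) :=
            mul_le_mul_of_nonneg_right hcsq1 (by positivity)
        _ = ((N:ℝ)^(2*l) * cL * LB1^2) * ((1/16:ℝ)^d) := by
            rw [hNpow, hK1def, hLB1]; ring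
    have hXnn : 0 ≤ cc * r^2 * T * (N:ℝ)^(l-s+1) :=
      mul_nonneg (mul_nonneg (mul_nonneg hccp.le (sq_nonneg r)) hT.le)
        (Real.rpow_pos_of_pos hNN0 _).le
    exact sqrt_step hXnn key
  · -- case (ii)
    intro T hT hTc
    have hrw1 : (N:ℝ)^(-(1:ℝ)) = ((N:ℝ))⁻¹ := by
      rw [Real.rpow_neg hNN0.le, Real.rpow_one]
    have hT10 : T * (10*(d:ℝ)*(N:ℝ)) ≤ 1 := by
      have h1 : T ≤ (1/(10*(d:ℝ))) * ((N:ℝ))⁻¹ := by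
        rw [hrw1] at hTc
        exact le_trans hTc (mul_le_mul_of_nonneg_right hcc10 (by positivity))
      calc T * (10*(d:ℝ)*(N:ℝ))
          ≤ ((1/(10*(d:ℝ))) * ((N:ℝ))⁻¹) * (10*(d:ℝ)*(N:ℝ)) :=
            mul_le_mul_of_nonneg_right h1 (by positivity)
        _ = 1 := by field_simp
    set LB2 := r^2 * ((1/8:ℝ) * ((((N:ℝ)^(-s) * c2)^2) * (T/2) * ((1/8:ℝ))^d)) with hLB2
    have hLB2nn : 0 ≤ LB2 := by
      refine mul_nonneg (sq_nonneg r) (mul_nonneg (by norm_num) (mul_nonneg (mul_nonneg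
        (sq_nonneg _) (by linarith)) (by positivity)))
    have hptw : ∀ ξ ∈ Box d (0:Euc d) (1/8) (3/16),
        cL0 * LB2^2 ≤ (1+‖ξ‖^2)^l * ‖Wfun s r (Qset d) {0, vv hd N} T ξ‖^2 := by
      intro ξ hξ
      have hre := W_re_near hd s T N hN hT hT10 r ξ hξ
      have hsq : LB2^2 ≤ ‖Wfun s r (Qset d) {0, vv hd N} T ξ‖^2 := by
        have hb : |(Wfun s r (Qset d) {0, vv hd N} T ξ).re| ≤
            ‖Wfun s r (Qset d) {0, vv hd N} T ξ‖ := by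
          exact Complex.abs_re_le_norm _
        exact pow_le_pow_left₀ hLB2nn (le_trans (le_trans hre (le_abs_self _)) hb) 2
      have hξc : ∀ i, |ξ i| ≤ 1 := by
        intro i
        have := box_abs_le hd hξ (by norm_num) (by norm_num) i
        rwa [euc_zero_apply hd, sub_zero] at this
      have hL := near_rpow_0 hd l ξ hξc
      exact mul_le_mul hL hsq (by positivity) (Real.rpow_pos_of_pos (by positivity) l).le
    have hint := F_integrable hd l s r T N hN hT
    have hvolA : (volume (Box d (0:Euc d) (1/8) (3/16))).toReal = (1/16:ℝ)^d := by
      rw [volume_box, ← ENNReal.ofReal_pow (by norm_num), ENNReal.toReal_ofReal (by positivity)]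
      norm_num
    have hAfin : volume (Box d (0:Euc d) (1/8) (3/16)) ≠ ⊤ := by
      rw [volume_box]; exact ENNReal.pow_ne_top ENNReal.ofReal_ne_top
    have hIlow : (cL0 * LB2^2) * ((1/16:ℝ)^d) ≤
        ∫ ξ, (1+‖ξ‖^2)^l * ‖Wfun s r (Qset d) {0, vv hd N} T ξ‖^2 := by
      rw [← hvolA]
      refine le_trans (setIntegral_ge_of_const_le_real (measurableSet_box _ _ _) hAfin hptw
        hint.integrableOn)
        (setIntegral_le_integral hint (Filter.Eventually.of_forall fun ξ => ?_))
      positivity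
    have hs2 : ((N:ℝ)^(-s))^2 = (N:ℝ)^(-(2*s)) := by
      rw [rpow_sq _ hNN0]; congr 1; ring
    have key : (cc * r^2 * T * (N:ℝ)^(-(2*s)))^2 ≤
        ∫ ξ, (1+‖ξ‖^2)^l * ‖Wfun s r (Qset d) {0, vv hd N} T ξ‖^2 := by
      refine le_trans ?_ hIlow
      calc (cc * r^2 * T * (N:ℝ)^(-(2*s)))^2
          = cc^2 * ((r^2*T)^2 * ((N:ℝ)^(-(2*s)))^2) := by ring
        _ ≤ K2 * ((r^2*T)^2 * ((N:ℝ)^(-(2*s)))^2) :=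
            mul_le_mul_of_nonneg_right hcsq2 (by positivity)
        _ = (cL0 * LB2^2) * ((1/16:ℝ)^d) := by
            rw [← hs2, hK2def, hLB2]; ring
    have hXnn : 0 ≤ cc * r^2 * T * (N:ℝ)^(-(2*s)) :=
      mul_nonneg (mul_nonneg (mul_nonneg hccp.le (sq_nonneg r)) hT.le)
        (Real.rpow_pos_of_pos hNN0 _).le
    exact sqrt_step hXnn key

end
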